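/- Fix c > 0 and L̄ > 1, L = L̄·log₂ n, K = c·n/L. Let Φ be the fraction of positions i ∈ {1,...,n} of a circular length-n string that are covered by at least one of K reads of length L with independent uniform starting positions (position i is covered if some read starts in {i−L+1,...,i} mod n). Then for every ε > 0, P(|Φ − (1 − e^{−c})| > ε(1 − e^{−c})) → 0 as n → ∞. -/

import Mathlib

open MeasureTheory ProbabilityTheory Real Filter Finset Topology

section fin
variable {n : ℕ}

lemma fin_sub_val (a b : Fin n) (h : a.val ≤ b.val) : (b - a).val = b.val - a.val := by
  rw [Fin.sub_def]
  simp only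
  have hb := b.isLt
  have ha := a.isLt
  have : n - a.val + b.val = n + (b.val - a.val) := by omega
  rw [this, Nat.add_mod_left, Nat.mod_eq_of_lt (by omega)]

lemma card_val_lt (L : ℕ) (h : L ≤ n) :
    (univ.filter fun v : Fin n => v.val < L).card = L := by
  rw [← Finset.card_range L]
  apply Finset.card_bij (fun v _ => v.val)
  · intro v hv; simp at hv ⊢; exact hv
  · intro a _ b _ hab; exact Fin.ext hab
  · intro a ha; simp at ha
    exact ⟨⟨a, lt_of_lt_of_le ha h⟩, by simp [ha], rfl⟩

lemma card_val_lt_le (L : ℕ) :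
    (univ.filter fun v : Fin n => v.val < L).card ≤ L := by
  rw [← Finset.card_range L]
  apply Finset.card_le_card_of_injOn (fun v => v.val)
  · intro v hv; simp at hv ⊢; exact hv
  · intro a _ b _ hab; exact Fin.ext hab

lemma card_shift (L : ℕ) (f : Fin n → Fin n) (hf : Function.Bijective f) :
    (univ.filter fun t : Fin n => (f t).val < L).card
      = (univ.filter fun v : Fin n => v.val < L).card := by
  apply Finset.card_bij (fun t _ => f t)
  · intro t ht; simp at ht ⊢; exact ht
  · intro a _ b _ hab; exact hf.injective hab
  · intro v hv; simp at hv
    obtain ⟨t, rfl⟩ := hf.surjective v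
    exact ⟨t, by simp [hv], rfl⟩

end fin

section aux
variable {Ω : Type} [MeasurableSpace Ω] {μ : Measure Ω} [IsProbabilityMeasure μ]
variable {n K : ℕ} {T : Fin K → Ω → Fin n}

omit [IsProbabilityMeasure μ] in
lemma aux_mem (hmeas : ∀ k, Measurable (T k))
    (hunif : ∀ k (t : Fin n), μ {ω | T k ω = t} = (n : ENNReal)⁻¹)
    (k : Fin K) (S : Finset (Fin n)) :
    μ {ω | T k ω ∈ S} = S.card / n := by
  classical
  have h1 : {ω | T k ω ∈ S} = ⋃ t ∈ S, {ω | T k ω = t} := by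
    ext ω; simp
  rw [h1, measure_biUnion_finset]
  · simp only [hunif k, Finset.sum_const, nsmul_eq_mul, div_eq_mul_inv]
  · intro a _ b _ hab
    simp only [Function.onFun, Set.disjoint_left, Set.mem_setOf_eq]
    intro ω h1 h2; exact hab (h1 ▸ h2)
  · intro t _
    exact (hmeas k) (measurableSet_singleton t)

lemma aux_prod (hmeas : ∀ k, Measurable (T k))
    (hunif : ∀ k (t : Fin n), μ {ω | T k ω = t} = (n : ENNReal)⁻¹)
    (hind : iIndepFun T μ)
    (S : Finset (Fin n)) :
    μ {ω | ∀ k, T k ω ∉ S} = (((n - S.card : ℕ) : ENNReal) / n) ^ K := by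
  classical
  have h1 : {ω | ∀ k, T k ω ∉ S}
      = ⋂ k ∈ (Finset.univ : Finset (Fin K)), T k ⁻¹' (↑(Sᶜ) : Set (Fin n)) := by
    ext ω; simp
  rw [h1, (iIndepFun_iff _ _ _).mp hind Finset.univ
    (fun k _ => ⟨(↑(Sᶜ) : Set (Fin n)), MeasurableSet.of_discrete, rfl⟩)]
  have h2 : ∀ k : Fin K, μ (T k ⁻¹' (↑(Sᶜ) : Set (Fin n))) = ((Sᶜ).card : ENNReal) / n :=
    fun k => aux_mem hmeas hunif k Sᶜ
  simp only [h2, Finset.prod_const, Finset.card_univ, Fintype.card_fin, Finset.card_compl,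
    Fintype.card_fin]

end aux

lemma main_bound {Ω : Type} [MeasurableSpace Ω] (μ : Measure Ω) [IsProbabilityMeasure μ]
    {n K L : ℕ} (hn : 0 < n) (T : Fin K → Ω → Fin n)
    (hmeas : ∀ k, Measurable (T k))
    (hunif : ∀ k (t : Fin n), μ {ω | T k ω = t} = (n : ENNReal)⁻¹)
    (hind : iIndepFun T μ)
    (δ q : ℝ) (hδ : 0 < δ)
    (hq : |(((n - (univ.filter fun v : Fin n => v.val < L).card : ℕ) : ℝ)/n)^K - q| ≤ δ/2) :
    μ {ω | δ < |((univ.filter (fun i : Fin n =>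
        ∃ k, (i - T k ω : Fin n).val < L)).card : ℝ)/n - (1 - q)|}
      ≤ ENNReal.ofReal ((2*L/n) / (δ/2)^2) := by
  classical
  haveI : NeZero n := ⟨hn.ne'⟩
  set m := (univ.filter fun v : Fin n => v.val < L).card with hm_def
  have hmn : m ≤ n := le_trans (Finset.card_filter_le _ _) (by simp)
  have hmL : m ≤ L := card_val_lt_le L
  set W : Fin n → Finset (Fin n) := fun i => univ.filter fun t => (i - t).val < L with hW_def
  have hWcard : ∀ i, (W i).card = m := fun i =>
    card_shift L (fun t => i - t) (Equiv.subLeft i).bijective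
  set U : Fin n → Set Ω := fun i => {ω | ∀ k, T k ω ∉ W i} with hU_def
  have hUmeas : ∀ i, MeasurableSet (U i) := by
    intro i
    have : U i = ⋂ k, (T k ⁻¹' (↑(W i) : Set (Fin n)))ᶜ := by ext ω; simp [hU_def]
    rw [this]
    exact MeasurableSet.iInter fun k => ((hmeas k) MeasurableSet.of_discrete).compl
  have hμU : ∀ i, μ (U i) = (((n - m : ℕ) : ENNReal) / n) ^ K := by
    intro i; rw [hU_def]; simp only
    rw [aux_prod hmeas hunif hind (W i), hWcard i]
  have hμUU : ∀ i j, μ (U i ∩ U j) = (((n - (W i ∪ W j).card : ℕ) : ENNReal) / n) ^ K := by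
    intro i j
    have : U i ∩ U j = {ω | ∀ k, T k ω ∉ W i ∪ W j} := by
      ext ω
      constructor
      · rintro ⟨h1, h2⟩ k hk
        rcases Finset.mem_union.mp hk with h | h
        exacts [h1 k h, h2 k h]
      · intro h
        exact ⟨fun k hk => h k (Finset.mem_union_left _ hk),
          fun k hk => h k (Finset.mem_union_right _ hk)⟩
    rw [this, aux_prod hmeas hunif hind]
  set q0 : ℝ := (((n - m : ℕ) : ℝ)/n)^K with hq0_def
  have hq0_nonneg : 0 ≤ q0 := pow_nonneg (by positivity) _
  have htoReal : ∀ (a : ℕ), ((((a : ℕ) : ENNReal)/n)^K).toReal = ((a : ℝ)/n)^K := by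
    intro a
    rw [ENNReal.toReal_pow, ENNReal.toReal_div]
    norm_num
  have hμU_toReal : ∀ i, (μ (U i)).toReal = q0 := by
    intro i; rw [hμU i, htoReal]
  -- random variables
  set Y : Fin n → Ω → ℝ := fun i => (U i).indicator (fun _ => (1:ℝ)) with hY_def
  set Ψ : Ω → ℝ := fun ω => (∑ i, Y i ω)/n with hΨ_def
  have hYmeas : ∀ i, Measurable (Y i) := fun i =>
    measurable_const.indicator (hUmeas i)
  have hΨmeas : Measurable Ψ := by
    apply Measurable.div_const
    exact Finset.measurable_sum _ fun i _ => hYmeas i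
  have hYval : ∀ i ω, Y i ω = if ω ∈ U i then (1:ℝ) else 0 := by
    intro i ω; simp [hY_def, Set.indicator]
  have hΨbdd : ∀ ω, ‖Ψ ω‖ ≤ 1 := by
    intro ω
    have h1 : (0:ℝ) ≤ ∑ i, Y i ω :=
      Finset.sum_nonneg fun i _ => by rw [hYval]; positivity
    have h2 : ∑ i, Y i ω ≤ n := by
      calc ∑ i, Y i ω ≤ ∑ _i : Fin n, (1:ℝ) :=
            Finset.sum_le_sum fun i _ => by rw [hYval]; split <;> norm_num
        _ = n := by simp
    rw [Real.norm_eq_abs, abs_le]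
    constructor
    · apply le_trans (by norm_num : (-1:ℝ) ≤ 0); positivity
    · rw [hΨ_def]; simp only
      rw [div_le_one (by positivity)]
      exact h2
  have hmem : MemLp Ψ 2 μ :=
    MemLp.of_bound hΨmeas.aestronglyMeasurable 1 (Filter.Eventually.of_forall hΨbdd)
  have hYint : ∀ i, Integrable (Y i) μ := fun i =>
    (integrable_const (1:ℝ)).indicator (hUmeas i)
  have hEY : ∀ i, ∫ ω, Y i ω ∂μ = q0 := by
    intro i
    rw [hY_def]; simp only
    rw [integral_indicator_const (1:ℝ) (hUmeas i), measureReal_def, hμU_toReal i, smul_eq_mul, mul_one]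
  have hEΨ : ∫ ω, Ψ ω ∂μ = q0 := by
    rw [hΨ_def]; simp only
    rw [integral_div, integral_finset_sum _ (fun i _ => hYint i)]
    simp only [hEY, Finset.sum_const, Finset.card_univ, Fintype.card_fin, nsmul_eq_mul]
    field_simp
  -- second moment
  have hYY : ∀ i j ω, Y i ω * Y j ω = (U i ∩ U j).indicator (fun _ => (1:ℝ)) ω := by
    intro i j ω
    rw [hYval, hYval]
    by_cases hi : ω ∈ U i <;> by_cases hj : ω ∈ U j <;>
      simp [Set.indicator, hi, hj]
  have hE2 : ∫ ω, (Ψ^2) ω ∂μ = (∑ i, ∑ j, (μ (U i ∩ U j)).toReal)/(n*n : ℝ) := by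
    have hfun : (Ψ^2) = fun ω => (∑ i, ∑ j, (U i ∩ U j).indicator (fun _ => (1:ℝ)) ω)/(n*n : ℝ) := by
      funext ω
      rw [Pi.pow_apply, sq, hΨ_def]
      simp only
      rw [div_mul_div_comm, Finset.sum_mul_sum]
      congr 1
      exact Finset.sum_congr rfl fun i _ => Finset.sum_congr rfl fun j _ => hYY i j ω
    rw [hfun, integral_div, integral_finset_sum _ (fun i _ =>
      integrable_finset_sum _ (fun j _ => (integrable_const (1:ℝ)).indicator ((hUmeas i).inter (hUmeas j))))]
    congr 1
    apply Finset.sum_congr rfl; intro i _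
    rw [integral_finset_sum _ (fun j _ => (integrable_const (1:ℝ)).indicator ((hUmeas i).inter (hUmeas j)))]
    apply Finset.sum_congr rfl; intro j _
    rw [integral_indicator_const (1:ℝ) ((hUmeas i).inter (hUmeas j)), measureReal_def, smul_eq_mul, mul_one]
  -- variance bound
  have hvar : variance Ψ μ ≤ 2*L/n := by
    rw [variance_eq_sub hmem, hE2, hEΨ]
    have hterm : ∀ i j : Fin n, (μ (U i ∩ U j)).toReal - q0^2
        ≤ if Disjoint (W i) (W j) then 0 else 1 := by
      intro i j
      by_cases hd : Disjoint (W i) (W j)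
      · simp only [hd, if_true, sub_nonpos]
        rw [hμUU i j, Finset.card_union_of_disjoint hd, hWcard i, hWcard j, htoReal]
        have h2mn : m + m ≤ n := by
          have := Finset.card_le_card (Finset.subset_univ (W i ∪ W j))
          rwa [Finset.card_union_of_disjoint hd, hWcard i, hWcard j, Finset.card_univ,
            Fintype.card_fin] at this
        have hcast : ((n - (m + m) : ℕ) : ℝ) = (n : ℝ) - m - m := by
          push_cast [Nat.cast_sub h2mn]; ring
        have hcast2 : ((n - m : ℕ) : ℝ) = (n : ℝ) - m := by
          push_cast [Nat.cast_sub hmn]; ring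
        have hkey : ((n - (m + m) : ℕ) : ℝ)/n ≤ (((n - m : ℕ) : ℝ)/n)^2 := by
          rw [hcast, hcast2, div_pow, div_le_div_iff₀ (by positivity) (by positivity)]
          have : ((n:ℝ) - m - m) * (n^2 : ℝ) ≤ ((n:ℝ) - m)^2 * n := by
            have hn' : (0:ℝ) ≤ n := by positivity
            nlinarith [sq_nonneg ((m:ℝ)), sq_nonneg ((n:ℝ) - m)]
          convert this using 2 <;> ring
        calc (((n - (m + m) : ℕ) : ℝ)/n)^K ≤ ((((n - m : ℕ) : ℝ)/n)^2)^K := by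
              apply pow_le_pow_left₀ (by positivity) hkey
          _ = q0^2 := by rw [hq0_def, ← pow_mul, ← pow_mul, Nat.mul_comm]
      · simp only [hd, if_false]
        have h1 : (μ (U i ∩ U j)).toReal ≤ 1 := by
          have := prob_le_one (μ := μ) (s := U i ∩ U j)
          exact ENNReal.toReal_le_of_le_ofReal (by norm_num) (by simpa using this)
        nlinarith [hq0_nonneg]
    have hbadcard : ∀ i : Fin n,
        (univ.filter fun j => ¬ Disjoint (W i) (W j)).card ≤ 2*L := by
      intro i
      have hsub : (univ.filter fun j => ¬ Disjoint (W i) (W j))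
          ⊆ (univ.filter fun j : Fin n => (j - i).val < L) ∪
            (univ.filter fun j : Fin n => (i - j).val < L) := by
        intro j hj
        simp only [Finset.mem_filter, Finset.mem_univ, true_and] at hj
        rw [Finset.not_disjoint_iff] at hj
        obtain ⟨t, hti, htj⟩ := hj
        simp only [hW_def, Finset.mem_filter, Finset.mem_univ, true_and] at hti htj
        simp only [Finset.mem_union, Finset.mem_filter, Finset.mem_univ, true_and]
        have hji : j - i = (j - t) - (i - t) := by abel
        have hij : i - j = (i - t) - (j - t) := by abel
        by_cases hab : (i - t).val ≤ (j - t).val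
        · left
          rw [hji, fin_sub_val _ _ hab]; omega
        · right
          rw [hij, fin_sub_val _ _ (le_of_not_ge hab)]; omega
      calc (univ.filter fun j => ¬ Disjoint (W i) (W j)).card
          ≤ ((univ.filter fun j : Fin n => (j - i).val < L) ∪
            (univ.filter fun j : Fin n => (i - j).val < L)).card := Finset.card_le_card hsub
        _ ≤ (univ.filter fun j : Fin n => (j - i).val < L).card +
            (univ.filter fun j : Fin n => (i - j).val < L).card := Finset.card_union_le _ _
        _ ≤ L + L := by
            apply Nat.add_le_add
            · rw [card_shift L (fun j => j - i) (Equiv.subRight i).bijective]; exact hmL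
            · rw [card_shift L (fun j => i - j) (Equiv.subLeft i).bijective]; exact hmL
        _ = 2*L := by ring
    have hsum : ∑ i : Fin n, ∑ j : Fin n, ((μ (U i ∩ U j)).toReal - q0^2) ≤ (n : ℝ) * (2*L) := by
      calc ∑ i : Fin n, ∑ j : Fin n, ((μ (U i ∩ U j)).toReal - q0^2)
          ≤ ∑ i : Fin n, ∑ j : Fin n, (if Disjoint (W i) (W j) then (0:ℝ) else 1) :=
            Finset.sum_le_sum fun i _ => Finset.sum_le_sum fun j _ => hterm i j
        _ = ∑ i : Fin n, ((univ.filter fun j => ¬ Disjoint (W i) (W j)).card : ℝ) := by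
            apply Finset.sum_congr rfl; intro i _
            have : ∀ j : Fin n, (if Disjoint (W i) (W j) then (0:ℝ) else 1)
                = (if ¬ Disjoint (W i) (W j) then (1:ℝ) else 0) := by
              intro j; by_cases h : Disjoint (W i) (W j) <;> simp [h]
            simp only [this]
            rw [Finset.sum_boole]
        _ ≤ ∑ _i : Fin n, ((2*L : ℕ) : ℝ) := by
            apply Finset.sum_le_sum; intro i _
            exact_mod_cast hbadcard i
        _ = (n : ℝ) * (2*L) := by push_cast; simp [Finset.sum_const, mul_comm]
    have hsplit : ∑ i : Fin n, ∑ j : Fin n, ((μ (U i ∩ U j)).toReal - q0^2)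
        = (∑ i : Fin n, ∑ j : Fin n, (μ (U i ∩ U j)).toReal) - (n*n : ℝ)*q0^2 := by
      simp only [Finset.sum_sub_distrib, Finset.sum_const, Finset.card_univ, Fintype.card_fin,
        nsmul_eq_mul]
      ring
    have hnn : (0:ℝ) < (n*n : ℝ) := by positivity
    have heq2 : (∑ i : Fin n, ∑ j : Fin n, (μ (U i ∩ U j)).toReal)/(n*n : ℝ) - q0^2
        = (∑ i : Fin n, ∑ j : Fin n, ((μ (U i ∩ U j)).toReal - q0^2))/(n*n : ℝ) := by
      rw [hsplit]
      field_simp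
    rw [heq2]
    calc (∑ i : Fin n, ∑ j : Fin n, ((μ (U i ∩ U j)).toReal - q0^2))/(n*n : ℝ)
        ≤ ((n : ℝ) * (2*L))/(n*n : ℝ) := (div_le_div_iff_of_pos_right hnn).mpr hsum
      _ = 2*L/n := by field_simp
  -- Chebyshev and conclusion
  have hcheb := meas_ge_le_variance_div_sq (μ := μ) hmem (half_pos hδ)
  have hXΨ : ∀ ω, ((univ.filter (fun i : Fin n =>
      ∃ k, (i - T k ω : Fin n).val < L)).card : ℝ)/n = 1 - Ψ ω := by
    intro ω
    have hfilt : (univ.filter (fun i : Fin n => ¬ ∃ k, (i - T k ω : Fin n).val < L))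
        = (univ.filter (fun i : Fin n => ω ∈ U i)) := by
      apply Finset.filter_congr
      intro i _
      simp [hU_def, hW_def, not_exists]
    have hcards : (univ.filter (fun i : Fin n => ∃ k, (i - T k ω : Fin n).val < L)).card
        + (univ.filter (fun i : Fin n => ω ∈ U i)).card = n := by
      rw [← hfilt, Finset.card_filter_add_card_filter_not, Finset.card_univ,
        Fintype.card_fin]
    have hsumY : ∑ i, Y i ω = ((univ.filter (fun i : Fin n => ω ∈ U i)).card : ℝ) := by
      simp only [hYval]
      rw [Finset.sum_boole]
    rw [hΨ_def]; simp only
    rw [hsumY]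
    have h1 : ((univ.filter (fun i : Fin n => ∃ k, (i - T k ω : Fin n).val < L)).card : ℝ)
        = (n : ℝ) - ((univ.filter (fun i : Fin n => ω ∈ U i)).card : ℝ) := by
      have := hcards
      push_cast [← this]
      ring
    rw [h1]
    field_simp
  have hsub : {ω | δ < |((univ.filter (fun i : Fin n =>
        ∃ k, (i - T k ω : Fin n).val < L)).card : ℝ)/n - (1 - q)|}
      ⊆ {ω | δ/2 ≤ |Ψ ω - ∫ x, Ψ x ∂μ|} := by
    intro ω hω
    simp only [Set.mem_setOf_eq] at hω ⊢
    rw [hXΨ ω] at hω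
    rw [hEΨ]
    have h1 : |(1 - Ψ ω) - (1 - q)| ≤ |q0 - q| + |Ψ ω - q0| := by
      have h2 : (1 - Ψ ω) - (1 - q) = (q - q0) + (q0 - Ψ ω) := by ring
      rw [h2]
      calc |(q - q0) + (q0 - Ψ ω)| ≤ |q - q0| + |q0 - Ψ ω| := abs_add_le _ _
        _ = |q0 - q| + |Ψ ω - q0| := by rw [abs_sub_comm q q0, abs_sub_comm q0 (Ψ ω)]
    linarith [hq]
  calc μ {ω | δ < |((univ.filter (fun i : Fin n =>
        ∃ k, (i - T k ω : Fin n).val < L)).card : ℝ)/n - (1 - q)|}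
      ≤ μ {ω | δ/2 ≤ |Ψ ω - ∫ x, Ψ x ∂μ|} := measure_mono hsub
    _ ≤ ENNReal.ofReal (variance Ψ μ / (δ/2)^2) := hcheb
    _ ≤ ENNReal.ofReal ((2*L/n) / (δ/2)^2) := by
        apply ENNReal.ofReal_le_ofReal
        exact (div_le_div_iff_of_pos_right (by positivity)).mpr hvar


lemma limit_lemma (c Lb : ℝ) (hc : 0 < c) (hL : 1 < Lb) :
    Tendsto (fun n : ℕ => (((n - ⌊Lb * Real.logb 2 (n:ℝ)⌋₊ : ℕ) : ℝ)/n)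
        ^(⌊c * n / (Lb * Real.logb 2 (n:ℝ))⌋₊)) atTop (𝓝 (Real.exp (-c))) := by
  set ℓ : ℕ → ℝ := fun n => Lb * Real.logb 2 (n:ℝ) with hℓ_def
  set Ln : ℕ → ℕ := fun n => ⌊ℓ n⌋₊ with hLn_def
  set Kn : ℕ → ℕ := fun n => ⌊c * n / ℓ n⌋₊ with hKn_def
  have hℓtop : Tendsto ℓ atTop atTop := by
    apply Tendsto.const_mul_atTop (by linarith : (0:ℝ) < Lb)
    exact (Real.tendsto_logb_atTop (by norm_num : (1:ℝ) < 2)).comp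
      tendsto_natCast_atTop_atTop
  have hlogn : Tendsto (fun n : ℕ => Real.log (n:ℝ) / (n:ℝ)) atTop (𝓝 0) :=
    (Real.isLittleO_log_id_atTop.tendsto_div_nhds_zero).comp tendsto_natCast_atTop_atTop
  have hℓn : Tendsto (fun n : ℕ => ℓ n / n) atTop (𝓝 0) := by
    have heq : (fun n : ℕ => ℓ n / n) = fun n : ℕ => (Lb / Real.log 2) * (Real.log (n:ℝ) / n) := by
      funext n
      rw [hℓ_def]; simp only [Real.logb]
      ring
    rw [heq]
    simpa using hlogn.const_mul (Lb / Real.log 2)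
  set a : ℕ → ℝ := fun n => ((Ln n : ℝ))/n with ha_def
  -- eventually facts
  have hev1 : ∀ᶠ n : ℕ in atTop, 1 ≤ ℓ n := hℓtop.eventually_ge_atTop 1
  have hevn : ∀ᶠ n : ℕ in atTop, (1:ℝ) ≤ n :=
    tendsto_natCast_atTop_atTop.eventually_ge_atTop 1
  have hevK : ∀ᶠ n : ℕ in atTop, 1 ≤ c * n / ℓ n := by
    have h1 : Tendsto (fun n : ℕ => (ℓ n / n)⁻¹) atTop atTop := by
      apply Tendsto.comp tendsto_inv_nhdsGT_zero
      apply tendsto_nhdsWithin_of_tendsto_nhds_of_eventually_within _ hℓn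
      filter_upwards [hev1, hevn] with n h1 hn
      have hnpos : (0:ℝ) < n := by linarith
      exact div_pos (by linarith) hnpos
    have h2 := h1.const_mul_atTop hc
    have h3 : Tendsto (fun n : ℕ => c * n / ℓ n) atTop atTop := by
      apply h2.congr
      intro n
      rw [inv_div, mul_div_assoc]
    exact h3.eventually_ge_atTop 1
  have ha_nonneg : ∀ᶠ n : ℕ in atTop, 0 ≤ a n := by
    filter_upwards [hevn] with n hn
    have hnpos : (0:ℝ) < n := by linarith
    exact div_nonneg (Nat.cast_nonneg _) hnpos.le
  have ha_le : ∀ᶠ n : ℕ in atTop, a n ≤ ℓ n / n := by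
    filter_upwards [hev1, hevn] with n h1 hn
    have hnpos : (0:ℝ) < n := by linarith
    exact (div_le_div_iff_of_pos_right hnpos).mpr (Nat.floor_le (by linarith))
  have ha0 : Tendsto a atTop (𝓝 0) :=
    tendsto_of_tendsto_of_tendsto_of_le_of_le' tendsto_const_nhds hℓn ha_nonneg ha_le
  have ha_pos : ∀ᶠ n : ℕ in atTop, 0 < a n := by
    filter_upwards [hev1, hevn] with n h1 hn
    have hLn1 : 1 ≤ Ln n := Nat.le_floor (by exact_mod_cast h1)
    have : (0:ℝ) < n := by linarith
    apply div_pos _ this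
    exact_mod_cast Nat.lt_of_lt_of_le Nat.zero_lt_one hLn1
  have ha_lt1 : ∀ᶠ n : ℕ in atTop, a n < 1 := ha0.eventually_lt_const one_pos
  -- Kn * a n → c
  have hupper : ∀ᶠ n : ℕ in atTop, (Kn n : ℝ) * a n ≤ c := by
    filter_upwards [hev1, hevn] with n h1 hn
    have hℓpos : (0:ℝ) < ℓ n := by linarith
    have hnpos : (0:ℝ) < n := by linarith
    have h2 : (Kn n : ℝ) ≤ c * n / ℓ n := Nat.floor_le (by positivity)
    have h3 : ((Ln n : ℕ) : ℝ) ≤ ℓ n := Nat.floor_le (by linarith)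
    have h4 : (Kn n : ℝ) * (Ln n : ℝ) ≤ (c * n / ℓ n) * ℓ n :=
      mul_le_mul h2 h3 (by positivity) (by positivity)
    rw [div_mul_cancel₀ _ hℓpos.ne'] at h4
    rw [ha_def]
    calc (Kn n : ℝ) * ((Ln n : ℝ)/n) = ((Kn n : ℝ) * (Ln n : ℝ))/n := by ring
      _ ≤ (c * n)/n := (div_le_div_iff_of_pos_right hnpos).mpr h4
      _ = c := by field_simp
  have hlower : ∀ᶠ n : ℕ in atTop, c - c / ℓ n - ℓ n / n ≤ (Kn n : ℝ) * a n := by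
    filter_upwards [hev1, hevn, hevK] with n h1 hn hK
    have hℓpos : (0:ℝ) < ℓ n := by linarith
    have hnpos : (0:ℝ) < n := by linarith
    have h2 : c * n / ℓ n - 1 ≤ (Kn n : ℝ) := by
      have := Nat.lt_floor_add_one (c * n / ℓ n)
      linarith
    have h3 : ℓ n - 1 ≤ ((Ln n : ℕ) : ℝ) := by
      have := Nat.lt_floor_add_one (ℓ n)
      linarith
    have h4 : (c * n / ℓ n - 1) * (ℓ n - 1) ≤ (Kn n : ℝ) * (Ln n : ℝ) := by
      apply mul_le_mul h2 h3 (by linarith) (by positivity)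
    have h5 : (c * n / ℓ n - 1) * (ℓ n - 1) = c * n - c * n / ℓ n - ℓ n + 1 := by
      field_simp
      ring
    rw [ha_def]
    have h6 : (Kn n : ℝ) * ((Ln n : ℝ)/n) = ((Kn n : ℝ) * (Ln n : ℝ))/n := by ring
    rw [h6]
    have h7 := (div_le_div_iff_of_pos_right hnpos).mpr (h5 ▸ h4)
    have h8 : (c * n - c * n / ℓ n - ℓ n + 1)/n = c - c/ℓ n - ℓ n/n + 1/n := by
      field_simp
    rw [h8] at h7
    have h9 : (0:ℝ) < 1/n := by positivity
    linarith
  have hlow_tendsto : Tendsto (fun n : ℕ => c - c / ℓ n - ℓ n / n) atTop (𝓝 c) := by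
    have h1 : Tendsto (fun n : ℕ => c / ℓ n) atTop (𝓝 0) :=
      Tendsto.div_atTop tendsto_const_nhds hℓtop
    have := (tendsto_const_nhds (x := c) (f := atTop)).sub h1 |>.sub hℓn
    simpa using this
  have hKa : Tendsto (fun n : ℕ => (Kn n : ℝ) * a n) atTop (𝓝 c) :=
    tendsto_of_tendsto_of_tendsto_of_le_of_le' hlow_tendsto tendsto_const_nhds hlower hupper
  -- slope
  have hd : HasDerivAt (fun x : ℝ => Real.log (1 - x)) (-1) 0 := by
    have h1 : HasDerivAt (fun x : ℝ => 1 - x) (-1) 0 := (hasDerivAt_id 0).const_sub 1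
    have h2 := (Real.hasDerivAt_log (by norm_num : (1:ℝ) - 0 ≠ 0)).comp 0 h1
    have h3 : (fun x : ℝ => Real.log (1 - x)) = Real.log ∘ (fun x => 1 - x) := rfl
    rw [h3]
    have h4 : ((1:ℝ) - 0)⁻¹ * -1 = -1 := by norm_num
    rw [h4] at h2
    exact h2
  have hslope := hasDerivAt_iff_tendsto_slope.mp hd
  have hane : ∀ᶠ n : ℕ in atTop, a n ∈ ({0}ᶜ : Set ℝ) := by
    filter_upwards [ha_pos] with n h
    exact ne_of_gt h
  have hacomp : Tendsto (fun n : ℕ => slope (fun x : ℝ => Real.log (1 - x)) 0 (a n)) atTop (𝓝 (-1)) :=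
    hslope.comp (tendsto_nhdsWithin_of_tendsto_nhds_of_eventually_within a ha0 hane)
  have hlog : Tendsto (fun n : ℕ => (Kn n : ℝ) * Real.log (1 - a n)) atTop (𝓝 (-c)) := by
    have hmul := hKa.mul hacomp
    rw [show c * (-1 : ℝ) = -c by ring] at hmul
    apply Tendsto.congr' _ hmul
    filter_upwards [ha_pos] with n h
    rw [slope_def_field]
    field_simp
    simp only [Real.log_one, mul_zero, zero_mul, sub_zero]
    field_simp [h.ne']
  -- conclusion
  have hfinal : Tendsto (fun n : ℕ => (1 - a n)^(Kn n)) atTop (𝓝 (Real.exp (-c))) := by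
    apply Tendsto.congr' _ ((Real.continuous_exp.continuousAt.tendsto).comp hlog)
    filter_upwards [ha_lt1] with n h
    have hpos : 0 < 1 - a n := by linarith
    rw [Function.comp_apply, ← Real.exp_log hpos, ← Real.exp_nat_mul]
    rw [Real.exp_log hpos]
  apply Tendsto.congr' _ hfinal
  have hLnlen : ∀ᶠ n : ℕ in atTop, Ln n ≤ n := by
    have h0 : ∀ᶠ n : ℕ in atTop, ℓ n / n < 1 := hℓn.eventually_lt_const one_pos
    filter_upwards [h0, hevn] with n h hn
    have hnpos : (0:ℝ) < n := by linarith
    have hlt : ℓ n < n := (div_lt_one hnpos).mp h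
    calc Ln n ≤ ⌊(n:ℝ)⌋₊ := Nat.floor_le_floor hlt.le
      _ = n := Nat.floor_natCast n
  filter_upwards [hLnlen, hevn] with n hle hn
  have hnpos : (0:ℝ) < n := by linarith
  have hcast : ((n - Ln n : ℕ) : ℝ) = (n : ℝ) - (Ln n : ℝ) := by
    push_cast [Nat.cast_sub hle]; ring
  rw [hcast]
  congr 1
  rw [ha_def]
  field_simp


lemma ell_div_tendsto (Lb : ℝ) (hL : 1 < Lb) :
    Tendsto (fun n : ℕ => Lb * Real.logb 2 (n:ℝ) / n) atTop (𝓝 0) := by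
  have hlogn : Tendsto (fun n : ℕ => Real.log (n:ℝ) / (n:ℝ)) atTop (𝓝 0) :=
    (Real.isLittleO_log_id_atTop.tendsto_div_nhds_zero).comp tendsto_natCast_atTop_atTop
  have heq : (fun n : ℕ => Lb * Real.logb 2 (n:ℝ) / n)
      = fun n : ℕ => (Lb / Real.log 2) * (Real.log (n:ℝ) / n) := by
    funext n
    simp only [Real.logb]
    ring
  rw [heq]
  simpa using hlogn.const_mul (Lb / Real.log 2)

theorem stmt12 (c Lb : ℝ) (hc : 0 < c) (hL : 1 < Lb) (ε : ℝ) (hε : 0 < ε)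
    (Ω : ℕ → Type) (mΩ : ∀ n, MeasurableSpace (Ω n))
    (μ : ∀ n, Measure (Ω n)) (hprob : ∀ n, IsProbabilityMeasure (μ n))
    (T : ∀ n : ℕ, Fin (⌊c * n / (Lb * Real.logb 2 n)⌋₊) → Ω n → Fin n)
    (hmeas : ∀ n k, Measurable (T n k))
    (hunif : ∀ n, 0 < n → ∀ k (t : Fin n), μ n {ω | T n k ω = t} = (n : ENNReal)⁻¹)
    (hind : ∀ n, iIndepFun (T n) (μ n)) :
    Tendsto (fun n : ℕ =>
      μ n {ω | ε * (1 - Real.exp (-c)) <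
        |((Finset.univ.filter (fun i : Fin n =>
            ∃ k, (i - T n k ω : Fin n).val < ⌊Lb * Real.logb 2 n⌋₊)).card : ℝ) / n -
          (1 - Real.exp (-c))|})
      atTop (nhds 0) := by
  have hexp1 : Real.exp (-c) < 1 := by
    rw [Real.exp_lt_one_iff]
    linarith
  have hqpos : 0 < 1 - Real.exp (-c) := by linarith
  set δ : ℝ := ε * (1 - Real.exp (-c)) with hδ_def
  have hδpos : 0 < δ := mul_pos hε hqpos
  have hℓn := ell_div_tendsto Lb hL
  -- eventually ⌊ℓ n⌋₊ ≤ n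
  have hfl : ∀ᶠ n : ℕ in atTop, ⌊Lb * Real.logb 2 (n:ℝ)⌋₊ ≤ n := by
    have h0 : ∀ᶠ n : ℕ in atTop, Lb * Real.logb 2 (n:ℝ) / n < 1 := hℓn.eventually_lt_const one_pos
    filter_upwards [h0, eventually_gt_atTop 0] with n h hn
    have hnpos : (0:ℝ) < n := by exact_mod_cast hn
    have hlt : Lb * Real.logb 2 (n:ℝ) < n := (div_lt_one hnpos).mp h
    calc ⌊Lb * Real.logb 2 (n:ℝ)⌋₊ ≤ ⌊(n:ℝ)⌋₊ := Nat.floor_le_floor hlt.le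
      _ = n := Nat.floor_natCast n
  -- eventually |q0 - exp(-c)| ≤ δ/2
  have hlim := limit_lemma c Lb hc hL
  have hev_q : ∀ᶠ n : ℕ in atTop,
      |(((n - ⌊Lb * Real.logb 2 (n:ℝ)⌋₊ : ℕ) : ℝ)/n)^(⌊c * n / (Lb * Real.logb 2 (n:ℝ))⌋₊)
        - Real.exp (-c)| ≤ δ/2 := by
    have h2 := Metric.tendsto_atTop.mp hlim (δ/2) (by positivity)
    obtain ⟨N, hN⟩ := h2
    filter_upwards [eventually_ge_atTop N] with n hn
    have := hN n hn
    rw [Real.dist_eq] at this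
    exact this.le
  -- upper bound tendsto 0
  have h2Ln : Tendsto (fun n : ℕ => (2 * (⌊Lb * Real.logb 2 (n:ℝ)⌋₊ : ℝ) / n)) atTop (𝓝 0) := by
    apply tendsto_of_tendsto_of_tendsto_of_le_of_le' tendsto_const_nhds
      (by simpa using hℓn.const_mul 2)
    · filter_upwards [eventually_gt_atTop 0] with n hn
      have hnpos : (0:ℝ) < n := by exact_mod_cast hn
      positivity
    · filter_upwards [eventually_ge_atTop 2] with n hn
      have hnpos : (0:ℝ) < n := by
        have : (2:ℝ) ≤ n := by exact_mod_cast hn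
        linarith
      have h1 : (1:ℝ) ≤ n := by
        have : (2:ℝ) ≤ n := by exact_mod_cast hn
        linarith
      have hflle : (⌊Lb * Real.logb 2 (n:ℝ)⌋₊ : ℝ) ≤ Lb * Real.logb 2 (n:ℝ) := by
        apply Nat.floor_le
        have h2n : (1:ℝ) < 2 := by norm_num
        have hlogb : 0 ≤ Real.logb 2 (n:ℝ) := Real.logb_nonneg h2n h1
        positivity
      calc 2 * (⌊Lb * Real.logb 2 (n:ℝ)⌋₊ : ℝ) / n ≤ 2 * (Lb * Real.logb 2 (n:ℝ)) / n := by
            exact (div_le_div_iff_of_pos_right hnpos).mpr (by linarith)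
        _ = 2 * (Lb * Real.logb 2 (n:ℝ) / n) := by ring
  have hub : Tendsto (fun n : ℕ =>
      ENNReal.ofReal ((2 * (⌊Lb * Real.logb 2 (n:ℝ)⌋₊ : ℕ) / n : ℝ) / (δ/2)^2)) atTop (𝓝 0) := by
    have h1 : Tendsto (fun n : ℕ => (2 * (⌊Lb * Real.logb 2 (n:ℝ)⌋₊ : ℝ) / n : ℝ) / (δ/2)^2)
        atTop (𝓝 0) := by
      have := h2Ln.div_const ((δ/2)^2)
      simpa using this
    have h2 := ENNReal.tendsto_ofReal (a := 0) h1
    simpa using h2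
  -- squeeze
  apply tendsto_of_tendsto_of_tendsto_of_le_of_le' tendsto_const_nhds hub
  · exact Eventually.of_forall fun n => zero_le
  · filter_upwards [hev_q, hfl, eventually_gt_atTop 0] with n hq' hfl' hn
    haveI := hprob n
    have hqm : |(((n - (Finset.univ.filter fun v : Fin n =>
        v.val < ⌊Lb * Real.logb 2 (n:ℝ)⌋₊).card : ℕ) : ℝ)/n)
          ^(⌊c * n / (Lb * Real.logb 2 (n:ℝ))⌋₊) - Real.exp (-c)| ≤ δ/2 := by
      rw [card_val_lt _ hfl']
      exact hq'
    exact main_bound (μ n) hn (T n) (hmeas n) (hunif n hn) (hind n) δ (Real.exp (-c)) hδpos hqm
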